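/- Let X ∈ bd(S^n_+) \ {0} be a nonzero positive semidefinite singular matrix with eigendecomposition X = P Diag(λ) Pᵀ, let α = {i : λ_i > 0} and β = {i : λ_i = 0}. Then the relative interior of the tangent cone to S^n_+ at X is ri(T_{S^n_+}(X)) = {Γ ∈ S^n | P_βᵀ Γ P_β ≻ 0}, where P_β is the submatrix of eigenvector columns corresponding to zero eigenvalues. -/

import Mathlib

open scoped Classical
open Matrix

attribute [local instance] Matrix.normedAddCommGroup Matrix.normedSpace

section Aux

variable {ι : Type*} [Fintype ι]

lemma dot_self_nonneg' (x : ι → ℝ) : 0 ≤ x ⬝ᵥ x :=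
  Finset.sum_nonneg fun k _ => mul_self_nonneg _

lemma dot_self_pos' {x : ι → ℝ} (hx : x ≠ 0) : 0 < x ⬝ᵥ x :=
  lt_of_le_of_ne (dot_self_nonneg' x) fun h => hx (dotProduct_self_eq_zero.mp h.symm)

lemma sq_entry_le_dot (x : ι → ℝ) (i : ι) : x i * x i ≤ x ⬝ᵥ x :=
  Finset.single_le_sum (f := fun k => x k * x k) (fun k _ => mul_self_nonneg _)
    (Finset.mem_univ i)

lemma abs_entry_mul_le_dot (x : ι → ℝ) (i j : ι) : |x i * x j| ≤ x ⬝ᵥ x := by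
  have hi := sq_entry_le_dot x i
  have hj := sq_entry_le_dot x j
  rw [abs_le]
  constructor <;> nlinarith [sq_nonneg (x i - x j), sq_nonneg (x i + x j)]

/-- Elementary quadratic form bound. -/
lemma quad_abs_le (B : Matrix ι ι ℝ) (x : ι → ℝ) :
    |x ⬝ᵥ B *ᵥ x| ≤ (∑ i, ∑ j, |B i j|) * (x ⬝ᵥ x) := by
  have h1 : x ⬝ᵥ B *ᵥ x = ∑ i, ∑ j, x i * (B i j * x j) := by
    simp [dotProduct, Matrix.mulVec, Finset.mul_sum]
  rw [h1, Finset.sum_mul]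
  calc |∑ i, ∑ j, x i * (B i j * x j)|
      ≤ ∑ i, |∑ j, x i * (B i j * x j)| := Finset.abs_sum_le_sum_abs _ _
    _ ≤ ∑ i, ∑ j, |x i * (B i j * x j)| :=
        Finset.sum_le_sum fun i _ => Finset.abs_sum_le_sum_abs _ _
    _ ≤ ∑ i, ∑ j, |B i j| * (x ⬝ᵥ x) := by
        refine Finset.sum_le_sum fun i _ => Finset.sum_le_sum fun j _ => ?_
        have he : x i * (B i j * x j) = B i j * (x i * x j) := by ring
        rw [he, abs_mul]
        exact mul_le_mul_of_nonneg_left (abs_entry_mul_le_dot x i j) (abs_nonneg _)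
    _ = ∑ i, (∑ j, |B i j|) * (x ⬝ᵥ x) := by simp [Finset.sum_mul]

lemma dot_mulVec_self (L : Matrix ι ι ℝ) (y : ι → ℝ) :
    y ⬝ᵥ (Lᵀ * L) *ᵥ y = (L *ᵥ y) ⬝ᵥ (L *ᵥ y) := by
  rw [← mulVec_mulVec, dotProduct_mulVec, vecMul_transpose]

/-- Coercivity of a positive definite quadratic form. -/
lemma posdef_coercive [DecidableEq ι] {A : Matrix ι ι ℝ} (hA : A.PosDef) :
    ∃ c : ℝ, 0 < c ∧ ∀ x : ι → ℝ, c * (x ⬝ᵥ x) ≤ x ⬝ᵥ A *ᵥ x := by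
  obtain ⟨R, hRR, hRsym⟩ : ∃ R : Matrix ι ι ℝ, R * R = A ∧ Rᵀ = R := by
    open scoped MatrixOrder in
    refine ⟨CFC.sqrt A, CFC.sqrt_mul_sqrt_self A hA.posSemidef.nonneg, ?_⟩
    have h := (CFC.sqrt_nonneg A).posSemidef.1
    rwa [Matrix.IsHermitian, Matrix.conjTranspose_eq_transpose_of_trivial] at h
  have hdet : IsUnit A.det := hA.det_pos.ne'.isUnit
  set L := A⁻¹ * R with hLdef
  set q := ∑ i, ∑ j, |(Lᵀ * L) i j| with hqdef
  have hq : 0 ≤ q :=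
    Finset.sum_nonneg fun _ _ => Finset.sum_nonneg fun _ _ => abs_nonneg _
  refine ⟨(q + 1)⁻¹, by positivity, fun x => ?_⟩
  have hLR : L * R = 1 := by
    rw [hLdef, Matrix.mul_assoc, hRR, Matrix.nonsing_inv_mul A hdet]
  have hyx : L *ᵥ (R *ᵥ x) = x := by rw [mulVec_mulVec, hLR, one_mulVec]
  have hxA : x ⬝ᵥ A *ᵥ x = (R *ᵥ x) ⬝ᵥ (R *ᵥ x) := by
    rw [← dot_mulVec_self, hRsym, hRR]
  have h0 : x ⬝ᵥ x = (R *ᵥ x) ⬝ᵥ (Lᵀ * L) *ᵥ (R *ᵥ x) := by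
    rw [dot_mulVec_self, hyx]
  have hfin : x ⬝ᵥ x ≤ q * (x ⬝ᵥ A *ᵥ x) := by
    rw [hxA, h0]
    exact le_trans (le_abs_self _) (quad_abs_le _ _)
  have hAx : 0 ≤ x ⬝ᵥ A *ᵥ x := by rw [hxA]; exact dot_self_nonneg' _
  have hc1 : (q + 1)⁻¹ * (q + 1) = 1 := inv_mul_cancel₀ (by positivity)
  have hc0 : (0:ℝ) ≤ (q + 1)⁻¹ := by positivity
  nlinarith [mul_le_mul_of_nonneg_left hfin hc0, mul_nonneg hc0 hAx]

end Aux

lemma intrinsicInterior_eq_of_span {E : Type*} [NormedAddCommGroup E] [NormedSpace ℝ E]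
    {s : Set E} {W : AffineSubspace ℝ E} (h : affineSpan ℝ s = W) :
    intrinsicInterior ℝ s = Subtype.val '' interior ((Subtype.val : W → E) ⁻¹' s) := by
  subst h; rfl

section Main

variable {n : ℕ}

/-- The submodule of symmetric matrices. -/
def symV (n : ℕ) : Submodule ℝ (Matrix (Fin n) (Fin n) ℝ) where
  carrier := {H | H.IsSymm}
  add_mem' := fun {a b} ha hb => by
    show (a + b)ᵀ = a + b
    rw [Matrix.transpose_add, show aᵀ = a from ha, show bᵀ = b from hb]
  zero_mem' := Matrix.transpose_zero
  smul_mem' := fun c a ha => by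
    show (c • a)ᵀ = c • a
    rw [Matrix.transpose_smul, show aᵀ = a from ha]

variable (P : Matrix (Fin n) (Fin n) ℝ) (lam : Fin n → ℝ)

/-- The compression `H ↦ P_βᵀ H P_β`. -/
def subβ (H : Matrix (Fin n) (Fin n) ℝ) :
    Matrix {i : Fin n // lam i = 0} {i : Fin n // lam i = 0} ℝ :=
  (Pᵀ * H * P).submatrix Subtype.val Subtype.val

lemma subβ_add (A B : Matrix (Fin n) (Fin n) ℝ) :
    subβ P lam (A + B) = subβ P lam A + subβ P lam B := by
  ext i j
  simp [subβ, Matrix.mul_add, Matrix.add_mul]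

lemma subβ_sub (A B : Matrix (Fin n) (Fin n) ℝ) :
    subβ P lam (A - B) = subβ P lam A - subβ P lam B := by
  ext i j
  simp [subβ, Matrix.mul_sub, Matrix.sub_mul]

lemma subβ_smul (t : ℝ) (A : Matrix (Fin n) (Fin n) ℝ) :
    subβ P lam (t • A) = t • subβ P lam A := by
  ext i j
  simp [subβ, Matrix.mul_smul, Matrix.smul_mul]

lemma subβ_one (hP' : Pᵀ * P = 1) : subβ P lam (1 : Matrix (Fin n) (Fin n) ℝ) = 1 := by
  rw [subβ, Matrix.mul_one, hP', Matrix.submatrix_one _ Subtype.val_injective]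

lemma subβ_isSymm {H : Matrix (Fin n) (Fin n) ℝ} (hH : H.IsSymm) :
    (subβ P lam H).IsSymm := by
  show (subβ P lam H)ᵀ = _
  rw [subβ, Matrix.transpose_submatrix]
  congr 1
  rw [Matrix.transpose_mul, Matrix.transpose_mul, Matrix.transpose_transpose,
    show Hᵀ = H from hH, ← Matrix.mul_assoc]

lemma subβ_isHermitian {H : Matrix (Fin n) (Fin n) ℝ} (hH : H.IsSymm) :
    (subβ P lam H).IsHermitian := by
  rw [Matrix.IsHermitian, Matrix.conjTranspose_eq_transpose_of_trivial]
  exact subβ_isSymm P lam hH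

lemma subβ_continuous : Continuous (subβ P lam) :=
  ((continuous_const.matrix_mul continuous_id).matrix_mul continuous_const).matrix_submatrix _ _

/-- `1 + t • B` is positive semidefinite for `B` symmetric and suitable small `t`. -/
lemma one_add_smul_posSemidef {ι : Type*} [Fintype ι] [DecidableEq ι]
    (B : Matrix ι ι ℝ) (hB : B.IsSymm) :
    ((1 : Matrix ι ι ℝ) + ((∑ i, ∑ j, |B i j|) + 1)⁻¹ • B).PosSemidef := by
  set C := ∑ i, ∑ j, |B i j| with hC
  have hC0 : 0 ≤ C := Finset.sum_nonneg fun _ _ => Finset.sum_nonneg fun _ _ => abs_nonneg _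
  set t := (C + 1)⁻¹ with ht
  have ht0 : (0:ℝ) ≤ t := by positivity
  have htc : t * (C + 1) = 1 := inv_mul_cancel₀ (by positivity)
  refine Matrix.PosSemidef.of_dotProduct_mulVec_nonneg ?_ ?_
  · refine Matrix.isHermitian_one.add ?_
    rw [Matrix.IsHermitian, Matrix.conjTranspose_eq_transpose_of_trivial,
      Matrix.transpose_smul, show Bᵀ = B from hB]
  · intro x
    have hstar : star x = x := funext fun i => star_trivial _
    rw [hstar, Matrix.add_mulVec, Matrix.one_mulVec, Matrix.smul_mulVec,
      dotProduct_add, dotProduct_smul]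
    have habs := (abs_le.mp (quad_abs_le B x)).1
    have hxx := dot_self_nonneg' x
    have : t • (x ⬝ᵥ B *ᵥ x) = t * (x ⬝ᵥ B *ᵥ x) := rfl
    rw [this]
    nlinarith [mul_le_mul_of_nonneg_left habs ht0, mul_nonneg ht0 hxx]

end Main

theorem relint_tangentCone_psd {n : ℕ} (X P : Matrix (Fin n) (Fin n) ℝ) (lam : Fin n → ℝ)
    (hX : X.PosSemidef) (hXne : X ≠ 0) (hsing : ¬ X.PosDef)
    (hP : P * Pᵀ = 1)
    (hdecomp : X = P * Matrix.diagonal lam * Pᵀ) :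
    intrinsicInterior ℝ
        {H : Matrix (Fin n) (Fin n) ℝ | H.IsSymm ∧
          Matrix.PosSemidef (Matrix.of fun i j : {i : Fin n // lam i = 0} =>
            (Pᵀ * H * P) i.1 j.1)} =
      {Γ : Matrix (Fin n) (Fin n) ℝ | Γ.IsSymm ∧
        Matrix.PosDef (Matrix.of fun i j : {i : Fin n // lam i = 0} =>
          (Pᵀ * Γ * P) i.1 j.1)} := by
  classical
  have hP' : Pᵀ * P = 1 := mul_eq_one_comm.mp hP
  show intrinsicInterior ℝ {H : Matrix (Fin n) (Fin n) ℝ | H.IsSymm ∧ (subβ P lam H).PosSemidef}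
      = {Γ : Matrix (Fin n) (Fin n) ℝ | Γ.IsSymm ∧ (subβ P lam Γ).PosDef}
  set S : Set (Matrix (Fin n) (Fin n) ℝ) := {H : Matrix (Fin n) (Fin n) ℝ | H.IsSymm ∧ (subβ P lam H).PosSemidef} with hSdef
  set T : Set (Matrix (Fin n) (Fin n) ℝ) := {Γ : Matrix (Fin n) (Fin n) ℝ | Γ.IsSymm ∧ (subβ P lam Γ).PosDef} with hTdef
  set W : AffineSubspace ℝ (Matrix (Fin n) (Fin n) ℝ) := (symV n).toAffineSubspace with hWdef
  -- membership facts
  have h1S : (1 : Matrix (Fin n) (Fin n) ℝ) ∈ S := ⟨Matrix.isSymm_one, by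
    rw [subβ_one P lam hP']
    exact Matrix.PosDef.posSemidef (Matrix.PosDef.one)⟩
  have h0S : (0 : Matrix (Fin n) (Fin n) ℝ) ∈ S := ⟨Matrix.transpose_zero, by
    have : subβ P lam (0 : Matrix (Fin n) (Fin n) ℝ) = 0 := by ext i j; simp [subβ]
    rw [this]; exact Matrix.PosSemidef.zero⟩
  -- affine span of S is the symmetric subspace
  have hspan : affineSpan ℝ S = W := by
    apply le_antisymm
    · rw [affineSpan_le]
      intro H hH
      exact Submodule.mem_toAffineSubspace.mpr hH.1
    · intro H hH
      have hHsymm : H.IsSymm := Submodule.mem_toAffineSubspace.mp hH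
      set B := subβ P lam H with hB
      set C := ∑ i, ∑ j, |B i j| with hC
      have hC0 : 0 ≤ C :=
        Finset.sum_nonneg fun _ _ => Finset.sum_nonneg fun _ _ => abs_nonneg _
      set t : ℝ := (C + 1)⁻¹ with htdef
      have ht0 : 0 < t := by positivity
      have htS : (1 : Matrix (Fin n) (Fin n) ℝ) + t • H ∈ S := by
        refine ⟨?_, ?_⟩
        · show ((1:Matrix (Fin n) (Fin n) ℝ) + t • H)ᵀ = (1:Matrix (Fin n) (Fin n) ℝ) + t • H
          rw [Matrix.transpose_add, Matrix.transpose_smul,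
            show (1:Matrix (Fin n) (Fin n) ℝ)ᵀ = 1 from Matrix.isSymm_one, show Hᵀ = H from hHsymm]
        · rw [subβ_add, subβ_smul, subβ_one P lam hP']
          exact one_add_smul_posSemidef B (subβ_isSymm P lam hHsymm)
      have hmem := AffineSubspace.smul_vsub_vadd_mem (affineSpan ℝ S) t⁻¹
        (subset_affineSpan ℝ S htS) (subset_affineSpan ℝ S h1S) (subset_affineSpan ℝ S h0S)
      have heq : t⁻¹ • (((1 : Matrix (Fin n) (Fin n) ℝ) + t • H) -ᵥ (1 : Matrix (Fin n) (Fin n) ℝ)) +ᵥ (0 : Matrix (Fin n) (Fin n) ℝ) = H := by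
        rw [vsub_eq_sub, vadd_eq_add, add_sub_cancel_left, add_zero, smul_smul,
          inv_mul_cancel₀ ht0.ne', one_smul]
      rwa [heq] at hmem
  refine (intrinsicInterior_eq_of_span hspan).trans ?_
  have hmain : interior ((Subtype.val : W → Matrix (Fin n) (Fin n) ℝ) ⁻¹' S) = (Subtype.val : W → Matrix (Fin n) (Fin n) ℝ) ⁻¹' T := by
    apply Set.Subset.antisymm
    · intro H hH
      have hHS : (H : Matrix (Fin n) (Fin n) ℝ) ∈ S := Set.mem_preimage.mp (interior_subset hH)
      refine ⟨hHS.1, Matrix.PosDef.of_dotProduct_mulVec_pos (subβ_isHermitian P lam hHS.1) fun x hx => ?_⟩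
      by_contra hlt
      rw [not_lt] at hlt
      have hstar : star x = x := funext fun i => star_trivial _
      rw [hstar] at hlt
      obtain ⟨ε, hε, hball⟩ := Metric.mem_nhds_iff.mp (mem_interior_iff_mem_nhds.mp hH)
      set t : ℝ := ε / (‖(1 : Matrix (Fin n) (Fin n) ℝ)‖ + 1) with htdef
      have ht0 : 0 < t := by positivity
      have hmem1 : (1 : Matrix (Fin n) (Fin n) ℝ) ∈ symV n := Matrix.isSymm_one
      have hmemH : (H : Matrix (Fin n) (Fin n) ℝ) ∈ symV n := Submodule.mem_toAffineSubspace.mp H.2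
      have hmem' : (H : Matrix (Fin n) (Fin n) ℝ) - t • 1 ∈ W :=
        Submodule.mem_toAffineSubspace.mpr ((symV n).sub_mem hmemH ((symV n).smul_mem t hmem1))
      set H' : W := ⟨(H : Matrix (Fin n) (Fin n) ℝ) - t • 1, hmem'⟩ with hH'def
      have hdist : H' ∈ Metric.ball H ε := by
        rw [Metric.mem_ball, Subtype.dist_eq, dist_eq_norm]
        have : ((H : Matrix (Fin n) (Fin n) ℝ) - t • 1) - (H : Matrix (Fin n) (Fin n) ℝ) = -(t • 1) := by abel
        rw [hH'def, this, norm_neg, norm_smul, Real.norm_eq_abs, abs_of_pos ht0]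
        have hn0 : (0:ℝ) ≤ ‖(1 : Matrix (Fin n) (Fin n) ℝ)‖ := norm_nonneg _
        calc t * ‖(1 : Matrix (Fin n) (Fin n) ℝ)‖ < t * (‖(1 : Matrix (Fin n) (Fin n) ℝ)‖ + 1) := by
              exact (mul_lt_mul_iff_right₀ ht0).mpr (by linarith)
          _ = ε := by rw [htdef]; field_simp
      have hS' : ((H : Matrix (Fin n) (Fin n) ℝ) - t • 1) ∈ S := hball hdist
      have hq := hS'.2.dotProduct_mulVec_nonneg x
      rw [hstar, subβ_sub, subβ_smul, subβ_one P lam hP',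
        Matrix.sub_mulVec, Matrix.smul_mulVec, Matrix.one_mulVec,
        dotProduct_sub, dotProduct_smul] at hq
      have hxx := dot_self_pos' hx
      have : t • (x ⬝ᵥ x) = t * (x ⬝ᵥ x) := rfl
      rw [this] at hq
      nlinarith
    · apply interior_maximal
      · intro H hH
        exact ⟨hH.1, hH.2.posSemidef⟩
      · rw [isOpen_iff_mem_nhds]
        intro H₀ hH₀
        obtain ⟨c, hc, hcoer⟩ := posdef_coercive hH₀.2
        set A₀ := subβ P lam (H₀ : Matrix (Fin n) (Fin n) ℝ) with hA₀
        have hg : Continuous fun H : W => ∑ i, ∑ j, |(subβ P lam (H : Matrix (Fin n) (Fin n) ℝ) - A₀) i j| := by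
          apply continuous_finset_sum
          intro i _
          apply continuous_finset_sum
          intro j _
          exact ((((subβ_continuous P lam).comp continuous_subtype_val).sub
            continuous_const).matrix_elem i j).abs
        have hopen : IsOpen ((fun H : W => ∑ i, ∑ j, |(subβ P lam (H : Matrix (Fin n) (Fin n) ℝ) - A₀) i j|) ⁻¹'
            Set.Iio c) := hg.isOpen_preimage _ isOpen_Iio
        refine Filter.mem_of_superset (hopen.mem_nhds ?_) ?_
        · show (∑ i, ∑ j, |(subβ P lam (H₀ : Matrix (Fin n) (Fin n) ℝ) - A₀) i j|) < c
          simpa [hA₀] using hc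
        · intro H hHlt
          have hq : (∑ i, ∑ j, |(subβ P lam (H : Matrix (Fin n) (Fin n) ℝ) - A₀) i j|) < c := hHlt
          have hHsymm : (H : Matrix (Fin n) (Fin n) ℝ).IsSymm := Submodule.mem_toAffineSubspace.mp H.2
          refine ⟨hHsymm, Matrix.PosDef.of_dotProduct_mulVec_pos (subβ_isHermitian P lam hHsymm) fun x hx => ?_⟩
          have hstar : star x = x := funext fun i => star_trivial _
          rw [hstar]
          have hdec : subβ P lam (H : Matrix (Fin n) (Fin n) ℝ) *ᵥ x = A₀ *ᵥ x + (subβ P lam (H : Matrix (Fin n) (Fin n) ℝ) - A₀) *ᵥ x := by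
            rw [← Matrix.add_mulVec, add_sub_cancel]
          rw [hdec, dotProduct_add]
          have h1 := hcoer x
          have h2 := (abs_le.mp (quad_abs_le (subβ P lam (H : Matrix (Fin n) (Fin n) ℝ) - A₀) x)).1
          have hxx := dot_self_pos' hx
          nlinarith
  refine (congrArg (Subtype.val '' ·) hmain).trans ?_
  apply Set.image_preimage_eq_of_subset
  rw [Subtype.range_val]
  intro Γ hΓ
  exact Submodule.mem_toAffineSubspace.mpr hΓ.1
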